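/- arXiv:2308.06402 — 3 statements merged into one kernel-verified Lean document; each statement's English description precedes it below -/
import Mathlib

section
/- A density operator (state) ρ commutes with the rank-one projection P_φ onto a unit vector φ if and only if Γ P_φ ρ P_φ + η P_φ ρ + \bar{η} ρ P_φ = 0, where Γ > 0 and η = −Γ/2 + iγ with γ ∈ ℝ. -/
noncomputable section

/-- The rank-one operator `|u⟩⟨v|`. -/
noncomputable def outer {E F : Type*} [NormedAddCommGroup E] [InnerProductSpace ℂ E]
    [NormedAddCommGroup F] [InnerProductSpace ℂ F] (u : F) (v : E) : E →ₗ[ℂ] F where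
  toFun x := (inner ℂ v x : ℂ) • u
  map_add' x y := by simp [inner_add_right, add_smul]
  map_smul' c x := by simp [inner_smul_right, smul_smul]

lemma outer_apply {E F : Type*} [NormedAddCommGroup E] [InnerProductSpace ℂ E]
    [NormedAddCommGroup F] [InnerProductSpace ℂ F] (u : F) (v : E) (x : E) :
    outer u v x = (inner ℂ v x : ℂ) • u := rfl

/-- A state `ρ` commutes with the rank-one projection `P_φ` onto a unit
vector `φ` iff `Γ P_φ ρ P_φ + η P_φ ρ + conj η ρ P_φ = 0`, where `Γ > 0` and
`η = -Γ/2 + iγ`. -/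
theorem stmt7 {H : Type*} [NormedAddCommGroup H] [InnerProductSpace ℂ H]
    [FiniteDimensional ℂ H] (ρ : H →ₗ[ℂ] H)
    (hsym : ρ.IsSymmetric) (hpos : ∀ x : H, 0 ≤ (inner ℂ x (ρ x) : ℂ).re)
    (htr : LinearMap.trace ℂ H ρ = 1)
    (φ : H) (hφ : ‖φ‖ = 1)
    (P : H →ₗ[ℂ] H) (hP : P = outer φ φ)
    (Γ γ : ℝ) (hΓ : 0 < Γ) (η : ℂ) (hη : η = -(Γ / 2 : ℂ) + (γ : ℂ) * Complex.I) :
    ρ ∘ₗ P = P ∘ₗ ρ ↔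
      (Γ : ℂ) • (P ∘ₗ ρ ∘ₗ P) + η • (P ∘ₗ ρ) + (starRingEnd ℂ η) • (ρ ∘ₗ P) = 0 := by
  have hφφ : (inner ℂ φ φ : ℂ) = 1 := by
    rw [inner_self_eq_norm_sq_to_K, hφ]; norm_num
  have hPφ : P φ = φ := by rw [hP, outer_apply, hφφ, one_smul]
  have hηconj : starRingEnd ℂ η = -(Γ / 2 : ℂ) - (γ : ℂ) * Complex.I := by
    rw [hη]
    simp [map_add, map_neg, map_mul, map_div₀, map_ofNat, Complex.conj_ofReal, Complex.conj_I]
    ring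
  have hsum : (Γ : ℂ) + η + starRingEnd ℂ η = 0 := by
    rw [hηconj, hη]; ring
  set a : ℂ := inner ℂ φ (ρ φ) with ha_def
  have ha : starRingEnd ℂ a = a := by
    rw [ha_def, inner_conj_symm]; exact hsym φ φ
  have hPρφ : P (ρ φ) = a • φ := by rw [hP, outer_apply]
  -- key consequences of ρ φ = a • φ
  have hρP : ρ φ = a • φ → ρ ∘ₗ P = a • P := by
    intro hρφ
    ext x
    simp [hP, outer_apply, map_smul, hρφ, smul_smul, mul_comm]
  have hPρ : ρ φ = a • φ → P ∘ₗ ρ = a • P := by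
    intro hρφ
    have hinner : ∀ x : H, (inner ℂ φ (ρ x) : ℂ) = a * inner ℂ φ x := by
      intro x
      rw [← hsym φ x, hρφ, inner_smul_left, ha]
    ext x
    simp [hP, outer_apply, hinner, smul_smul]
  constructor
  · intro h
    have hρφ : ρ φ = a • φ := by
      have h1 := LinearMap.ext_iff.mp h φ
      simp only [LinearMap.comp_apply, hPφ] at h1
      rw [h1, hPρφ]
    have hPP : P ∘ₗ P = P := by
      ext x
      simp [hP, outer_apply, inner_smul_right, hφφ, hφ]
    have hPρP : P ∘ₗ ρ ∘ₗ P = a • P := by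
      rw [hρP hρφ, LinearMap.comp_smul, hPP]
    rw [hPρP, hρP hρφ, hPρ hρφ, smul_smul, smul_smul, smul_smul, ← add_smul, ← add_smul,
      show (Γ : ℂ) * a + η * a + starRingEnd ℂ η * a = 0 by linear_combination a * hsum,
      zero_smul]
  · intro h
    have hηne : starRingEnd ℂ η ≠ 0 := by
      rw [hηconj]
      intro h0
      have := congrArg Complex.re h0
      simp at this
      linarith
    have h1 : (Γ : ℂ) • (P (ρ (P φ))) + η • (P (ρ φ)) + (starRingEnd ℂ η) • (ρ (P φ)) = 0 := by
      have := LinearMap.ext_iff.mp h φ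
      simpa using this
    rw [hPφ, hPρφ] at h1
    -- h1 : Γ • (a • φ) + η • (a • φ) + η̄ • ρ φ = 0
    have hG : (Γ : ℂ) • (a • φ) + η • (a • φ) = -((starRingEnd ℂ η) • (a • φ)) := by
      rw [smul_smul, smul_smul, smul_smul, ← add_smul, ← neg_smul]
      congr 1
      linear_combination a * hsum
    rw [hG, neg_add_eq_zero] at h1
    have hρφ : ρ φ = a • φ :=
      (smul_right_injective H hηne h1).symm
    rw [hρP hρφ, hPρ hρφ]
end
end

section
/- Let Z be a partial isometry with Z Z^* = Q and Z^* Z = P orthogonal projections, and let ρ be a positive operator with ρ P = P ρ = ρ restricted appropriately. If Z^* ρ Z = e^{β} ρ P (equivalently ρ Q = e^{β} Z ρ Z^* after transport), then ρ Z = e^{β} Z ρ on the range of P ⊕ Q. -/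
lemma adjoint_comp_self_eq_zero {H : Type*} [NormedAddCommGroup H]
    [InnerProductSpace ℂ H] [FiniteDimensional ℂ H]
    (A : H →ₗ[ℂ] H) (h : LinearMap.adjoint A ∘ₗ A = 0) : A = 0 := by
  ext x
  have h1 : (inner ℂ (A x) (A x) : ℂ) = 0 := by
    rw [← LinearMap.adjoint_inner_right]
    have h2 : LinearMap.adjoint A (A x) = 0 := by
      have := congrArg (fun T => T x) h
      simpa using this
    simp [h2]
  simpa using inner_self_eq_zero.mp h1

/-- Let `Z` be a partial isometry with initial projection `P = Z^* Z`
and final projection `Q = Z Z^*`, with `ran P ⊥ ran Q`, and let `ρ` be a positive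
operator commuting with `P` and `Q`. If `Z^* ρ Z = e^β ρ P`, then `ρ Z = e^β Z ρ`
on the range of `P ⊕ Q`. -/
theorem stmt10 {H : Type*} [NormedAddCommGroup H] [InnerProductSpace ℂ H]
    [FiniteDimensional ℂ H]
    (Z : H →ₗ[ℂ] H) (P Q : H →ₗ[ℂ] H)
    (hP : P = LinearMap.adjoint Z ∘ₗ Z) (hQ : Q = Z ∘ₗ LinearMap.adjoint Z)
    (hPidem : P ∘ₗ P = P) (hQidem : Q ∘ₗ Q = Q)
    (hPQ : P ∘ₗ Q = 0)
    (ρ : H →ₗ[ℂ] H)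
    (hsym : ρ.IsSymmetric) (hpos : ∀ x : H, 0 ≤ (inner ℂ x (ρ x) : ℂ).re)
    (hcommP : ρ ∘ₗ P = P ∘ₗ ρ) (hcommQ : ρ ∘ₗ Q = Q ∘ₗ ρ)
    (β : ℝ)
    (hdb : LinearMap.adjoint Z ∘ₗ ρ ∘ₗ Z = (Real.exp β : ℂ) • (ρ ∘ₗ P)) :
    ∀ x ∈ (LinearMap.range P ⊔ LinearMap.range Q : Submodule ℂ H),
      ρ (Z x) = (Real.exp β : ℂ) • Z (ρ x) := by
  set W := LinearMap.adjoint Z with hW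
  set c : ℂ := (Real.exp β : ℂ) with hc
  have hP' : W * Z = P := hP.symm
  have hQ' : Z * W = Q := hQ.symm
  have hPi : P * P = P := hPidem
  have hQi : Q * Q = Q := hQidem
  have hPQ' : P * Q = 0 := hPQ
  have hcP : ρ * P = P * ρ := hcommP
  have hcQ : ρ * Q = Q * ρ := hcommQ
  have hdb' : W * (ρ * Z) = c • (ρ * P) := hdb
  have hPadj : LinearMap.adjoint P = P := by
    rw [hP, LinearMap.adjoint_comp, LinearMap.adjoint_adjoint]
  have hQadj : LinearMap.adjoint Q = Q := by
    rw [hQ, LinearMap.adjoint_comp, LinearMap.adjoint_adjoint]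
  -- Z * P = Z
  have hZP : Z * P = Z := by
    have key : LinearMap.adjoint (Z * P - Z) ∘ₗ (Z * P - Z) = 0 := by
      have hadj : LinearMap.adjoint (Z * P - Z) = P * W - W := by
        rw [map_sub]
        congr 1
        show LinearMap.adjoint (Z ∘ₗ P) = _
        rw [LinearMap.adjoint_comp, hPadj]; rfl
      show LinearMap.adjoint (Z * P - Z) * (Z * P - Z) = 0
      rw [hadj]
      have expand : (P * W - W) * (Z * P - Z)
          = P * (W * Z) * P - P * (W * Z) - (W * Z) * P + W * Z := by noncomm_ring
      rw [expand, hP']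
      rw [show P * P * P = P by rw [hPi, hPi], hPi]
      abel
    have h0 := adjoint_comp_self_eq_zero _ key
    linear_combination (norm := module) h0
  -- Q * Z = Z
  have hQZ : Q * Z = Z := by
    have key : LinearMap.adjoint (Q * Z - Z) ∘ₗ (Q * Z - Z) = 0 := by
      have hadj : LinearMap.adjoint (Q * Z - Z) = W * Q - W := by
        rw [map_sub]
        congr 1
        show LinearMap.adjoint (Q ∘ₗ Z) = _
        rw [LinearMap.adjoint_comp, hQadj]; rfl
      show LinearMap.adjoint (Q * Z - Z) * (Q * Z - Z) = 0
      rw [hadj]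
      have expand : (W * Q - W) * (Q * Z - Z)
          = W * (Q * Q) * Z - W * Q * Z - W * Q * Z + W * Z := by noncomm_ring
      have hWQZ : W * Q * Z = P := by
        have e : W * Q * Z = (W * Z) * (W * Z) := by rw [← hQ']; noncomm_ring
        rw [e, hP', hPi]
      rw [expand, hQi, hWQZ, hP']
      abel
    have h0 := adjoint_comp_self_eq_zero _ key
    linear_combination (norm := module) h0
  -- Z * Z = 0
  have hZZ : Z * Z = 0 := by
    have e : Z * Z = Z * (P * Q) * Z := by
      have e1 : Z * (P * Q) * Z = ((Z * W) * Z) * ((Z * W) * Z) := by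
        rw [← hP', ← hQ']; noncomm_ring
      rw [e1, hQ', hQZ]
    rw [e, hPQ']
    noncomm_ring
  -- Z * Q = 0
  have hZQ : Z * Q = 0 := by
    rw [← hQ', ← mul_assoc, hZZ]; noncomm_ring
  -- key identity: ρ * Z = c • (Z * (ρ * P))
  have hkey : ρ * Z = c • (Z * (ρ * P)) := by
    calc ρ * Z = ρ * (Q * Z) := by rw [hQZ]
      _ = (ρ * Q) * Z := by noncomm_ring
      _ = (Q * ρ) * Z := by rw [hcQ]
      _ = Z * (W * (ρ * Z)) := by rw [← hQ']; noncomm_ring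
      _ = Z * (c • (ρ * P)) := by rw [hdb']
      _ = c • (Z * (ρ * P)) := by rw [mul_smul_comm]
  -- now evaluate pointwise
  intro x hx
  obtain ⟨y, hy, z, hz, rfl⟩ := Submodule.mem_sup.mp hx
  obtain ⟨u, rfl⟩ := hy
  obtain ⟨v, rfl⟩ := hz
  have appZQ : ∀ w : H, Z (Q w) = 0 := fun w => congrArg (fun T => T w) hZQ
  have appPP : ∀ w : H, P (P w) = P w := fun w => congrArg (fun T => T w) hPi
  have appPQ : ∀ w : H, P (Q w) = 0 := fun w => congrArg (fun T => T w) hPQ'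
  have apprQ : ∀ w : H, ρ (Q w) = Q (ρ w) := fun w => congrArg (fun T => T w) hcQ
  have appkey : ∀ w : H, ρ (Z w) = c • Z (ρ (P w)) :=
    fun w => congrArg (fun T => T w) hkey
  have lhs : ρ (Z (P u + Q v)) = c • Z (ρ (P u)) := by
    rw [appkey]
    congr 2
    rw [map_add, appPP, appPQ, add_zero]
  have rhs : Z (ρ (P u + Q v)) = Z (ρ (P u)) := by
    rw [map_add, map_add, apprQ, appZQ, add_zero]
  rw [lhs, rhs]
end

section
/- For the transport operator Z = ⊕_{k=0}^{N} Z_k on H = ⊕_{k=0}^{N+1} E_k, one has Z Z^* = n_1 P_{φ_{0_1}} ⊕ (⊕_{k=2}^{N+1} P_k) and Z^* Z = n_1 P_0 ⊕ (⊕_{k=1}^{N} |Z_k|), where |Z_k| = Z_k^* Z_k. -/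
noncomputable section

lemma outer_comp {E : Type*} [NormedAddCommGroup E] [InnerProductSpace ℂ E]
    (u v w x : E) : outer u v ∘ₗ outer w x = (inner ℂ v w : ℂ) • outer u x := by
  ext y
  simp [outer, inner_smul_right, smul_smul, mul_comm]

lemma adjoint_outer {E : Type*} [NormedAddCommGroup E] [InnerProductSpace ℂ E]
    [FiniteDimensional ℂ E] (u v : E) :
    LinearMap.adjoint (outer u v) = outer v u := by
  rw [eq_comm, LinearMap.eq_adjoint_iff]
  intro x y
  simp [outer, inner_smul_left, inner_smul_right]
  ring

lemma adjoint_smul' {E : Type*} [NormedAddCommGroup E] [InnerProductSpace ℂ E]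
    [FiniteDimensional ℂ E] (c : ℂ) (T : E →ₗ[ℂ] E) :
    LinearMap.adjoint (c • T) = (starRingEnd ℂ c) • LinearMap.adjoint T :=
  map_smulₛₗ (LinearMap.adjoint (E := E) (F := E) (𝕜 := ℂ)) c T

open Finset in
lemma dft_sum (n : ℕ) (hn : 0 < n) (a b : Fin n) :
    ∑ c : Fin n,
      (starRingEnd ℂ) (Complex.exp (2 * Real.pi * Complex.I / n) ^ (-((a.1 * c.1 : ℕ) : ℤ))) *
        Complex.exp (2 * Real.pi * Complex.I / n) ^ (-((b.1 * c.1 : ℕ) : ℤ)) =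
      if (a : ℕ) = (b : ℕ) then (n : ℂ) else 0 := by
  set ω := Complex.exp (2 * Real.pi * Complex.I / n) with hω
  have hprim : IsPrimitiveRoot ω n := Complex.isPrimitiveRoot_exp n hn.ne'
  have hω0 : ω ≠ 0 := Complex.exp_ne_zero _
  have hconj : (starRingEnd ℂ) ω = ω⁻¹ := by
    rw [hω, ← Complex.exp_conj, ← Complex.exp_neg]
    congr 1
    simp [map_div₀, Complex.conj_I, map_ofNat]
    ring
  have key : ∀ c : Fin n,
      (starRingEnd ℂ) (ω ^ (-((a.1 * c.1 : ℕ) : ℤ))) * ω ^ (-((b.1 * c.1 : ℕ) : ℤ))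
        = (ω ^ ((a.1 : ℤ) - (b.1 : ℤ))) ^ (c.1 : ℕ) := by
    intro c
    rw [map_zpow₀, hconj, inv_zpow, ← zpow_neg, neg_neg, ← zpow_add₀ hω0,
        ← zpow_natCast (ω ^ ((a.1 : ℤ) - (b.1 : ℤ))), ← zpow_mul]
    congr 1
    push_cast
    ring
  rw [Finset.sum_congr rfl (fun c _ => key c), Fin.sum_univ_eq_sum_range]
  by_cases hab : (a : ℕ) = (b : ℕ)
  · simp [hab, sub_self]
  · rw [if_neg hab]
    set m : ℤ := (a.1 : ℤ) - (b.1 : ℤ) with hm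
    have hx1 : ω ^ m ≠ 1 := by
      rw [Ne, hprim.zpow_eq_one_iff_dvd]
      intro hdvd
      have hm0 : m = 0 := Int.eq_zero_of_abs_lt_dvd hdvd (by
        rw [hm, abs_lt]; have := a.2; have := b.2; omega)
      rw [hm] at hm0
      omega
    rw [geom_sum_eq hx1]
    have : (ω ^ m) ^ n = 1 := by
      rw [← zpow_natCast (ω ^ m), ← zpow_mul, mul_comm, zpow_mul, zpow_natCast,
        hprim.pow_eq_one, one_zpow]
    rw [this, sub_self, zero_div]

lemma phi_orthonormal {E : Type*} [NormedAddCommGroup E] [InnerProductSpace ℂ E]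
    (m : ℕ) (hm : 0 < m) (f : Fin m → E)
    (hf : ∀ a b : Fin m, (inner ℂ (f a) (f b) : ℂ) = if (a : ℕ) = (b : ℕ) then 1 else 0)
    (a b : Fin m) :
    (inner ℂ (((Real.sqrt m : ℂ))⁻¹ • ∑ c : Fin m,
        (Complex.exp (2 * Real.pi * Complex.I / m)) ^ (-((a.1 * c.1 : ℕ) : ℤ)) • f c)
      (((Real.sqrt m : ℂ))⁻¹ • ∑ c : Fin m,
        (Complex.exp (2 * Real.pi * Complex.I / m)) ^ (-((b.1 * c.1 : ℕ) : ℤ)) • f c) : ℂ) =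
      if (a : ℕ) = (b : ℕ) then 1 else 0 := by
  simp only [inner_smul_left, inner_smul_right, inner_sum, sum_inner, hf, mul_ite, mul_one,
    mul_zero, Fin.val_eq_val, Finset.sum_ite_eq, Finset.mem_univ, if_true,
    Finset.sum_ite_eq', map_inv₀, Complex.conj_ofReal]
  have step : ((Real.sqrt m : ℂ))⁻¹ *
      ∑ x : Fin m, Complex.exp (2 * Real.pi * Complex.I / m) ^ (-((b.1 * x.1 : ℕ) : ℤ)) *
        (((Real.sqrt m : ℂ))⁻¹ *
          (starRingEnd ℂ) (Complex.exp (2 * Real.pi * Complex.I / m) ^ (-((a.1 * x.1 : ℕ) : ℤ)))) =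
      ((Real.sqrt m : ℂ))⁻¹ * ((Real.sqrt m : ℂ))⁻¹ *
      ∑ x : Fin m,
        (starRingEnd ℂ) (Complex.exp (2 * Real.pi * Complex.I / m) ^ (-((a.1 * x.1 : ℕ) : ℤ))) *
          Complex.exp (2 * Real.pi * Complex.I / m) ^ (-((b.1 * x.1 : ℕ) : ℤ)) := by
    rw [Finset.mul_sum, mul_assoc, Finset.mul_sum]
    exact Finset.sum_congr rfl fun x _ => by ring
  rw [step, dft_sum m hm a b]
  by_cases h : (a : ℕ) = (b : ℕ)
  · have hm' : (m : ℂ) ≠ 0 := Nat.cast_ne_zero.mpr hm.ne'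
    have hs : ((Real.sqrt m : ℂ)) * ((Real.sqrt m : ℂ)) = (m : ℂ) := by
      rw [← Complex.ofReal_mul, Real.mul_self_sqrt (Nat.cast_nonneg m)]
      simp
    rw [if_pos h, if_pos ((Fin.val_eq_val a b).mp h), ← mul_inv, hs, inv_mul_cancel₀ hm']
  · rw [if_neg h, if_neg (fun hab => h (by rw [hab])), mul_zero]

/-- For the transport operator `Z = ⊕_{k=0}^{N} Z_k` on
`H = ⊕_{k=0}^{N+1} E_k`, one has `Z Z^* = n_1 P_{φ_{0_1}} ⊕ (⊕_{k=2}^{N+1} P_k)` and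
`Z^* Z = n_1 P_0 ⊕ (⊕_{k=1}^{N} |Z_k|)`, where `|Z_k| = Z_k^* Z_k`. -/
theorem stmt18 {H : Type*} [NormedAddCommGroup H] [InnerProductSpace ℂ H]
    [FiniteDimensional ℂ H]
    (N : ℕ) (hN : 1 ≤ N) (n : ℕ → ℕ)
    (hn0 : n 0 = 1) (hnN1 : n (N + 1) = 1)
    (hmono : ∀ k, k ≤ N → n (k + 1) ≤ n k)
    (hpos : ∀ k, k ≤ N + 1 → 0 < n k)
    (e : ∀ k : ℕ, Fin (n k) → H)
    (honb : ∀ (k k' : ℕ), k ≤ N + 1 → k' ≤ N + 1 →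
      ∀ (a : Fin (n k)) (a' : Fin (n k')),
        (inner ℂ (e k a) (e k' a') : ℂ) =
          if k = k' ∧ (a : ℕ) = (a' : ℕ) then 1 else 0)
    (hspan : Submodule.span ℂ
      {v : H | ∃ k ≤ N + 1, ∃ a : Fin (n k), v = e k a} = ⊤)
    (φ : ∀ k : ℕ, Fin (n k) → H)
    (hφ : ∀ k, k ≤ N + 1 → ∀ a : Fin (n k),
      φ k a = ((Real.sqrt (n k) : ℂ))⁻¹ • ∑ b : Fin (n k),
        (Complex.exp (2 * Real.pi * Complex.I / (n k))) ^
          (-((a.1 * b.1 : ℕ) : ℤ)) • e k b)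
    (Zk : ℕ → (H →ₗ[ℂ] H))
    (hZ0 : Zk 0 = (Real.sqrt (n 1) : ℂ) •
      outer (φ 1 ⟨0, hpos 1 (by omega)⟩) (e 0 ⟨0, hpos 0 (by omega)⟩))
    (hZk : ∀ k, 1 ≤ k → ∀ hk : k ≤ N, Zk k = ∑ a : Fin (n (k + 1)),
      outer (e (k + 1) a) (φ k ⟨a.1, lt_of_lt_of_le a.2 (hmono k hk)⟩))
    (Z : H →ₗ[ℂ] H) (hZ : Z = ∑ k ∈ Finset.range (N + 1), Zk k)
    (P : ℕ → (H →ₗ[ℂ] H))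
    (hP : ∀ k, P k = ∑ a : Fin (n k), outer (e k a) (e k a)) :
    Z ∘ₗ LinearMap.adjoint Z =
      (n 1 : ℂ) • outer (φ 1 ⟨0, hpos 1 (by omega)⟩) (φ 1 ⟨0, hpos 1 (by omega)⟩) +
        ∑ k ∈ Finset.Icc 2 (N + 1), P k ∧
    LinearMap.adjoint Z ∘ₗ Z =
      (n 1 : ℂ) • P 0 +
        ∑ k ∈ Finset.Icc 1 N, (LinearMap.adjoint (Zk k) ∘ₗ Zk k) := by
  classical
  -- inner product facts
  have heφ : ∀ k j, k ≤ N + 1 → j ≤ N + 1 → k ≠ j →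
      ∀ (a : Fin (n k)) (b : Fin (n j)), (inner ℂ (e k a) (φ j b) : ℂ) = 0 := by
    intro k j hk hj hkj a b
    rw [hφ j hj b]
    simp [inner_smul_right, inner_sum, honb k j hk hj, hkj]
  have hφe : ∀ k j, k ≤ N + 1 → j ≤ N + 1 → k ≠ j →
      ∀ (a : Fin (n k)) (b : Fin (n j)), (inner ℂ (φ j b) (e k a) : ℂ) = 0 := by
    intro k j hk hj hkj a b
    rw [← inner_conj_symm, heφ k j hk hj hkj a b, map_zero]
  have hφφ : ∀ k, k ≤ N + 1 → ∀ (a b : Fin (n k)),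
      (inner ℂ (φ k a) (φ k b) : ℂ) = if (a : ℕ) = (b : ℕ) then 1 else 0 := by
    intro k hk a b
    rw [hφ k hk a, hφ k hk b]
    exact phi_orthonormal (n k) (hpos k hk) (e k)
      (fun a b => by simpa using honb k k hk hk a b) a b
  have hφφ' : ∀ k j, k ≤ N + 1 → j ≤ N + 1 → k ≠ j →
      ∀ (a : Fin (n k)) (b : Fin (n j)), (inner ℂ (φ k a) (φ j b) : ℂ) = 0 := by
    intro k j hk hj hkj a b
    rw [hφ k hk a]
    simp [inner_smul_left, sum_inner, heφ k j hk hj hkj]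
  have hss : (Real.sqrt (n 1) : ℂ) * (Real.sqrt (n 1) : ℂ) = ((n 1 : ℕ) : ℂ) := by
    rw [← Complex.ofReal_mul, Real.mul_self_sqrt (Nat.cast_nonneg _)]
    simp
  -- adjoints
  have hadj0 : LinearMap.adjoint (Zk 0) = (Real.sqrt (n 1) : ℂ) •
      outer (e 0 ⟨0, hpos 0 (by omega)⟩) (φ 1 ⟨0, hpos 1 (by omega)⟩) := by
    rw [hZ0, adjoint_smul', adjoint_outer, Complex.conj_ofReal]
  have hadjk : ∀ k, 1 ≤ k → ∀ hk : k ≤ N, LinearMap.adjoint (Zk k) =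
      ∑ a : Fin (n (k + 1)),
        outer (φ k ⟨a.1, lt_of_lt_of_le a.2 (hmono k hk)⟩) (e (k + 1) a) := by
    intro k h1 hk
    rw [hZk k h1 hk, map_sum]
    exact Finset.sum_congr rfl fun a _ => adjoint_outer _ _
  have hrange : Finset.range (N + 1) = insert 0 (Finset.Icc 1 N) := by
    ext x; simp only [Finset.mem_range, Finset.mem_insert, Finset.mem_Icc]; omega
  have h0notin : (0 : ℕ) ∉ Finset.Icc 1 N := by simp
  -- Part 1 : Z Z*
  have hcross1 : ∀ k ∈ Finset.range (N + 1), ∀ j ∈ Finset.range (N + 1), j ≠ k →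
      Zk k * LinearMap.adjoint (Zk j) = 0 := by
    intro k hk j hj hjk
    rw [Finset.mem_range] at hk hj
    rcases Nat.eq_zero_or_pos k with hk0 | hk1
    · subst hk0
      have hj1 : 1 ≤ j := by omega
      rw [hZ0, hadjk j hj1 (by omega), smul_mul_assoc, Finset.mul_sum]
      rw [Finset.sum_eq_zero, smul_zero]
      intro b _
      rw [Module.End.mul_eq_comp, outer_comp,
        heφ 0 j (by omega) (by omega) (by omega), zero_smul]
    · rcases Nat.eq_zero_or_pos j with hj0 | hj1
      · subst hj0
        rw [hZk k hk1 (by omega), hadj0, mul_smul_comm, Finset.sum_mul]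
        rw [Finset.sum_eq_zero, smul_zero]
        intro a _
        rw [Module.End.mul_eq_comp, outer_comp,
          hφe 0 k (by omega) (by omega) (by omega), zero_smul]
      · rw [hZk k hk1 (by omega), hadjk j hj1 (by omega), Finset.sum_mul_sum]
        apply Finset.sum_eq_zero
        intro a _
        apply Finset.sum_eq_zero
        intro b _
        rw [Module.End.mul_eq_comp, outer_comp,
          hφφ' k j (by omega) (by omega) (by omega), zero_smul]
  have hdiag1 : ∀ k, 1 ≤ k → ∀ hk : k ≤ N,
      Zk k * LinearMap.adjoint (Zk k) = P (k + 1) := by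
    intro k h1 hk
    rw [hadjk k h1 hk, hZk k h1 hk, Finset.sum_mul_sum, hP (k + 1)]
    apply Finset.sum_congr rfl
    intro a _
    rw [Finset.sum_eq_single a]
    · rw [Module.End.mul_eq_comp, outer_comp, hφφ k (by omega), if_pos rfl, one_smul]
    · intro b _ hba
      rw [Module.End.mul_eq_comp, outer_comp, hφφ k (by omega),
        if_neg (fun h => hba (Fin.ext h.symm)), zero_smul]
    · intro h; exact absurd (Finset.mem_univ a) h
  have hdiag10 : Zk 0 * LinearMap.adjoint (Zk 0) =
      (n 1 : ℂ) • outer (φ 1 ⟨0, hpos 1 (by omega)⟩) (φ 1 ⟨0, hpos 1 (by omega)⟩) := by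
    rw [hadj0, hZ0, smul_mul_assoc, mul_smul_comm, Module.End.mul_eq_comp, outer_comp,
      honb 0 0 (by omega) (by omega), if_pos ⟨rfl, rfl⟩, one_smul, smul_smul, hss]
  constructor
  · rw [← Module.End.mul_eq_comp, hZ, map_sum, Finset.sum_mul_sum]
    have hsingle : ∀ k ∈ Finset.range (N + 1),
        ∑ j ∈ Finset.range (N + 1), Zk k * LinearMap.adjoint (Zk j) =
          Zk k * LinearMap.adjoint (Zk k) := by
      intro k hk
      exact Finset.sum_eq_single k (fun j hj hjk => hcross1 k hk j hj hjk)
        (fun h => absurd hk h)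
    rw [Finset.sum_congr rfl hsingle, hrange, Finset.sum_insert h0notin, hdiag10]
    congr 1
    rw [show ∑ k ∈ Finset.Icc 2 (N + 1), P k = ∑ k ∈ Finset.Icc 1 N, P (k + 1) by
      rw [← Finset.map_add_right_Icc 1 N 1, Finset.sum_map]; rfl]
    exact Finset.sum_congr rfl fun k hk => by
      rw [Finset.mem_Icc] at hk; exact hdiag1 k hk.1 hk.2
  -- Part 2 : Z* Z
  · have hcross2 : ∀ k ∈ Finset.range (N + 1), ∀ j ∈ Finset.range (N + 1), j ≠ k →
        LinearMap.adjoint (Zk k) * Zk j = 0 := by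
      intro k hk j hj hjk
      rw [Finset.mem_range] at hk hj
      rcases Nat.eq_zero_or_pos k with hk0 | hk1
      · subst hk0
        have hj1 : 1 ≤ j := by omega
        rw [hadj0, hZk j hj1 (by omega), smul_mul_assoc, Finset.mul_sum]
        rw [Finset.sum_eq_zero, smul_zero]
        intro b _
        rw [Module.End.mul_eq_comp, outer_comp,
          hφe (j + 1) 1 (by omega) (by omega) (by omega), zero_smul]
      · rcases Nat.eq_zero_or_pos j with hj0 | hj1
        · subst hj0
          rw [hadjk k hk1 (by omega), hZ0, mul_smul_comm, Finset.sum_mul]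
          rw [Finset.sum_eq_zero, smul_zero]
          intro a _
          rw [Module.End.mul_eq_comp, outer_comp,
            heφ (k + 1) 1 (by omega) (by omega) (by omega), zero_smul]
        · rw [hadjk k hk1 (by omega), hZk j hj1 (by omega), Finset.sum_mul_sum]
          apply Finset.sum_eq_zero
          intro a _
          apply Finset.sum_eq_zero
          intro b _
          rw [Module.End.mul_eq_comp, outer_comp,
            honb (k + 1) (j + 1) (by omega) (by omega),
            if_neg (by rintro ⟨h, -⟩; omega), zero_smul]
    have hP0 : P 0 = outer (e 0 ⟨0, hpos 0 (by omega)⟩) (e 0 ⟨0, hpos 0 (by omega)⟩) := by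
      rw [hP 0]
      rw [show (Finset.univ : Finset (Fin (n 0))) = {⟨0, hpos 0 (by omega)⟩} by
        ext a
        simp only [Finset.mem_univ, Finset.mem_singleton, true_iff, Fin.ext_iff]
        have := a.2; omega]
      rw [Finset.sum_singleton]
    have hdiag20 : LinearMap.adjoint (Zk 0) * Zk 0 = (n 1 : ℂ) • P 0 := by
      rw [hadj0, hZ0, smul_mul_assoc, mul_smul_comm, Module.End.mul_eq_comp, outer_comp,
        hφφ 1 (by omega), if_pos rfl, one_smul, smul_smul, hss, hP0]
    rw [← Module.End.mul_eq_comp, hZ, map_sum, Finset.sum_mul_sum]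
    have hsingle : ∀ k ∈ Finset.range (N + 1),
        ∑ j ∈ Finset.range (N + 1), LinearMap.adjoint (Zk k) * Zk j =
          LinearMap.adjoint (Zk k) * Zk k := by
      intro k hk
      exact Finset.sum_eq_single k (fun j hj hjk => hcross2 k hk j hj hjk)
        (fun h => absurd hk h)
    rw [Finset.sum_congr rfl hsingle, hrange, Finset.sum_insert h0notin, hdiag20]
    congr 1
end
end
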